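/- arXiv:1712.02208 — 4 statements merged into one kernel-verified Lean document; each statement's English description precedes it below -/
import Mathlib

section
/- The action of the nilHecke algebra NH_n on ℤ[x_1,...,x_n] is faithful: if a ℤ-linear combination of the operators of the form (multiplication by a monomial) ∘ ∂_w, for w ranging over reduced words in S_n, acts as zero on ℤ[x_1,...,x_n], then all coefficients vanish. -/
set_option maxHeartbeats 1000000
set_option synthInstance.maxHeartbeats 400000

open MvPolynomial

noncomputable def Xmul (n j : ℕ) (hj : j < n) :
    Module.End ℤ (MvPolynomial (Fin n) ℤ) :=
  LinearMap.mulLeft ℤ (X ⟨j, hj⟩)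

noncomputable def swapVar (n i : ℕ) (hi : i + 1 < n) :
    MvPolynomial (Fin n) ℤ →ₐ[ℤ] MvPolynomial (Fin n) ℤ :=
  rename (Equiv.swap ⟨i, Nat.lt_of_succ_lt hi⟩ ⟨i + 1, hi⟩)

def IsDD (n i : ℕ) (hi : i + 1 < n)
    (D : Module.End ℤ (MvPolynomial (Fin n) ℤ)) : Prop :=
  ∀ f : MvPolynomial (Fin n) ℤ,
    (X ⟨i, Nat.lt_of_succ_lt hi⟩ - X ⟨i + 1, hi⟩) * D f = f - swapVar n i hi f

noncomputable def sOp (n i : ℕ) (hi : i + 1 < n)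
    (D : Module.End ℤ (MvPolynomial (Fin n) ℤ)) :
    Module.End ℤ (MvPolynomial (Fin n) ℤ) :=
  D * Xmul n i (Nat.lt_of_succ_lt hi) - Xmul n i (Nat.lt_of_succ_lt hi) * D

noncomputable def Dword (n : ℕ)
    (D : ∀ i, i + 1 < n → Module.End ℤ (MvPolynomial (Fin n) ℤ))
    (l : List ℕ) : Module.End ℤ (MvPolynomial (Fin n) ℤ) :=
  (l.map fun i => if h : i + 1 < n then D i h else 1).prod

def wordPerm (n : ℕ) (l : List ℕ) : Equiv.Perm (Fin n) :=
  (l.map fun i =>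
    if h : i + 1 < n then Equiv.swap ⟨i, Nat.lt_of_succ_lt h⟩ ⟨i + 1, h⟩ else Equiv.refl (Fin n)).prod

/-- `l` is a reduced word for the permutation `w` in terms of adjacent transpositions. -/
def IsReducedWord (n : ℕ) (l : List ℕ) (w : Equiv.Perm (Fin n)) : Prop :=
  (∀ i ∈ l, i + 1 < n) ∧ wordPerm n l = w ∧
    ∀ l' : List ℕ, (∀ i ∈ l', i + 1 < n) → wordPerm n l' = w → l.length ≤ l'.length

namespace NHF

abbrev R (n : ℕ) := MvPolynomial (Fin n) ℤ
abbrev K (n : ℕ) := FractionRing (R n)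

noncomputable def ι (n : ℕ) : R n →+* K n := algebraMap (R n) (K n)

lemma ι_inj (n : ℕ) : Function.Injective (ι n) := IsFractionRing.injective _ _

noncomputable def σ (n : ℕ) (v : Equiv.Perm (Fin n)) : K n →+* K n :=
  IsFractionRing.lift (g := (ι n).comp (rename (v : Fin n → Fin n)).toRingHom)
    ((ι_inj n).comp (rename_injective _ v.injective))

lemma σ_ι (n : ℕ) (v : Equiv.Perm (Fin n)) (f : R n) :
    σ n v (ι n f) = ι n (rename (v : Fin n → Fin n) f) :=
  IsFractionRing.lift_algebraMap _ _

lemma σ_σ (n : ℕ) (u v : Equiv.Perm (Fin n)) (x : K n) :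
    σ n u (σ n v x) = σ n (u * v) x := by
  have : (σ n u).comp (σ n v) = σ n (u * v) := by
    apply IsLocalization.ringHom_ext (nonZeroDivisors (R n))
    refine RingHom.ext fun f => ?_
    simp only [RingHom.comp_apply]
    rw [show algebraMap (R n) (K n) = ι n from rfl, σ_ι, σ_ι, σ_ι, rename_rename,
      Equiv.Perm.coe_mul]
  exact DFunLike.congr_fun this x

lemma σ_one (n : ℕ) (x : K n) : σ n 1 x = x := by
  have : (σ n 1) = RingHom.id (K n) := by
    apply IsLocalization.ringHom_ext (nonZeroDivisors (R n))
    refine RingHom.ext fun f => ?_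
    simp only [RingHom.comp_apply, RingHom.id_apply]
    rw [show algebraMap (R n) (K n) = ι n from rfl, σ_ι, Equiv.Perm.coe_one, rename_id, AlgHom.id_apply]
  rw [this]; rfl

lemma wordPerm_cons (n : ℕ) (i : ℕ) (l : List ℕ) (hi : i + 1 < n) :
    wordPerm n (i :: l) =
      Equiv.swap ⟨i, Nat.lt_of_succ_lt hi⟩ ⟨i + 1, hi⟩ * wordPerm n l := by
  simp [wordPerm, dif_pos hi]

lemma Dword_cons (n : ℕ) (D : ∀ i, i + 1 < n → Module.End ℤ (R n))
    (i : ℕ) (l : List ℕ) (hi : i + 1 < n) (f : R n) :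
    Dword n D (i :: l) f = D i hi (Dword n D l f) := by
  simp [Dword, dif_pos hi, Module.End.mul_apply]


section
variable (n : ℕ) (rwd : Equiv.Perm (Fin n) → List ℕ)

/-- The length of the chosen reduced word. -/
def len (w : Equiv.Perm (Fin n)) : ℕ := (rwd w).length

variable (hrwd : ∀ w, IsReducedWord n (rwd w) w)
include hrwd

lemma len_le (l : List ℕ) (hl : ∀ i ∈ l, i + 1 < n) :
    len n rwd (wordPerm n l) ≤ l.length :=
  (hrwd (wordPerm n l)).2.2 l hl rfl

lemma len_mul_le (i : ℕ) (hi : i + 1 < n) (w : Equiv.Perm (Fin n)) :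
    len n rwd (Equiv.swap ⟨i, Nat.lt_of_succ_lt hi⟩ ⟨i + 1, hi⟩ * w) ≤ len n rwd w + 1 := by
  have h1 : ∀ j ∈ i :: rwd w, j + 1 < n := by
    intro j hj
    rcases List.mem_cons.mp hj with h | h
    · exact h ▸ hi
    · exact (hrwd w).1 j h
  have h2 : wordPerm n (i :: rwd w) =
      Equiv.swap ⟨i, Nat.lt_of_succ_lt hi⟩ ⟨i + 1, hi⟩ * w := by
    rw [wordPerm_cons n i (rwd w) hi, (hrwd w).2.1]
  have := (hrwd _).2.2 (i :: rwd w) h1 h2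
  simpa [len] using this

lemma expand (D : ∀ i, i + 1 < n → Module.End ℤ (R n))
    (hD : ∀ i hi, IsDD n i hi (D i hi)) (l : List ℕ) (hl : ∀ i ∈ l, i + 1 < n) :
    ∃ a : Equiv.Perm (Fin n) → K n,
      (∀ f : R n, ι n (Dword n D l f) = ∑ v : Equiv.Perm (Fin n), a v * σ n v (ι n f)) ∧
      (∀ v, a v ≠ 0 → len n rwd v ≤ l.length) ∧
      (∀ v, a v ≠ 0 → len n rwd v = l.length → v = wordPerm n l) ∧
      (l.length = len n rwd (wordPerm n l) → a (wordPerm n l) ≠ 0) := by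
  classical
  induction l with
  | nil =>
    refine ⟨fun v => if v = 1 then 1 else 0, fun f => ?_, fun v hv => ?_,
      fun v hv _ => ?_, fun _ => ?_⟩
    · rw [show Dword n D [] f = f from rfl]
      rw [Finset.sum_eq_single (1 : Equiv.Perm (Fin n))]
      · simp [σ_one]
      · intro v _ hv; simp [if_neg hv]
      · simp
    · have hv1 : v = 1 := by by_contra h; simp [if_neg h] at hv
      subst hv1
      simpa [show wordPerm n [] = 1 from rfl] using len_le n rwd hrwd [] (by simp)
    · have hv1 : v = 1 := by by_contra h; simp [if_neg h] at hv
      exact hv1.trans rfl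
    · rw [show wordPerm n [] = 1 from rfl]; simp
  | cons i t ih =>
    have hi : i + 1 < n := hl i (List.mem_cons_self (a := i) (l := t))
    obtain ⟨a, ha, h1, h2, h3⟩ := ih (fun j hj => hl j (List.mem_cons_of_mem i hj))
    set s : Equiv.Perm (Fin n) := Equiv.swap ⟨i, Nat.lt_of_succ_lt hi⟩ ⟨i + 1, hi⟩ with hs
    have hss : ∀ v : Equiv.Perm (Fin n), s * (s * v) = v := by
      intro v; rw [← mul_assoc, hs, Equiv.swap_mul_self, one_mul]
    set d : K n := ι n (X ⟨i, Nat.lt_of_succ_lt hi⟩ - X ⟨i + 1, hi⟩) with hd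
    have hdne : d ≠ 0 := by
      rw [hd]
      intro h
      have h0 : (X ⟨i, Nat.lt_of_succ_lt hi⟩ - X ⟨i + 1, hi⟩ : R n) = 0 :=
        ι_inj n (by rw [h, map_zero])
      have h0' := X_injective (sub_eq_zero.mp h0)
      simp at h0'
    have σinj : Function.Injective (σ n s) := RingHom.injective _
    refine ⟨fun v => d⁻¹ * (a v - σ n s (a (s * v))), fun f => ?_, fun v hv => ?_,
      fun v hv hlen => ?_, fun hred => ?_⟩
    · rw [Dword_cons n D i t hi f]
      set g : R n := Dword n D t f with hg
      have key : d * ι n ((D i hi) g) = ι n g - σ n s (ι n g) := by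
        rw [hd, ← map_mul, hD i hi g, map_sub, σ_ι]
        rfl
      have step : ι n ((D i hi) g) = d⁻¹ * (ι n g - σ n s (ι n g)) := by
        rw [← key, ← mul_assoc, inv_mul_cancel₀ hdne, one_mul]
      have reidx : ∑ v : Equiv.Perm (Fin n), σ n s (a v) * σ n (s * v) (ι n f)
          = ∑ v : Equiv.Perm (Fin n), σ n s (a (s * v)) * σ n v (ι n f) := by
        refine Fintype.sum_equiv (Equiv.mulLeft s) _ _ fun v => ?_
        simp only [Equiv.coe_mulLeft]
        rw [hss]
      rw [step, ha f, map_sum]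
      simp only [map_mul, σ_σ]
      rw [reidx, ← Finset.sum_sub_distrib, Finset.mul_sum]
      exact Finset.sum_congr rfl fun v _ => by ring
    · replace hv : d⁻¹ * (a v - σ n s (a (s * v))) ≠ 0 := hv
      have hne : a v ≠ 0 ∨ a (s * v) ≠ 0 := by
        by_contra h
        push_neg at h
        rw [h.1, h.2, map_zero, sub_zero, mul_zero] at hv
        exact hv rfl
      rcases hne with h | h
      · have := h1 v h
        simp only [List.length_cons]
        omega
      · have hle := h1 _ h
        have := len_mul_le n rwd hrwd i hi (s * v)
        rw [← hs, hss] at this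
        simp only [List.length_cons]
        omega
    · replace hv : d⁻¹ * (a v - σ n s (a (s * v))) ≠ 0 := hv
      simp only [List.length_cons] at hlen
      have hav : a v = 0 := by
        by_contra h
        have := h1 v h
        omega
      have h' : a (s * v) ≠ 0 := by
        intro h
        rw [hav, h, map_zero, sub_zero, mul_zero] at hv
        exact hv rfl
      have hle := h1 _ h'
      have hge := len_mul_le n rwd hrwd i hi (s * v)
      rw [← hs, hss] at hge
      have heq : len n rwd (s * v) = t.length := by omega
      have := h2 (s * v) h' heq
      rw [wordPerm_cons n i t hi, ← hs, ← this, hss]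
    · show d⁻¹ * (a (wordPerm n (i :: t)) - σ n s (a (s * wordPerm n (i :: t)))) ≠ 0
      simp only [List.length_cons] at hred
      rw [wordPerm_cons n i t hi, ← hs] at hred ⊢
      have hwle := len_le n rwd hrwd t (fun j hj => hl j (List.mem_cons_of_mem i hj))
      have hmul := len_mul_le n rwd hrwd i hi (wordPerm n t)
      rw [← hs] at hmul
      have hwt : len n rwd (wordPerm n t) = t.length := by omega
      have haw : a (wordPerm n t) ≠ 0 := h3 hwt.symm
      have haw' : a (s * wordPerm n t) = 0 := by
        by_contra h
        have := h1 _ h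
        omega
      have hsw : s * (s * wordPerm n t) = wordPerm n t := hss _
      rw [hsw, haw', zero_sub]
      intro h
      rcases mul_eq_zero.mp h with h' | h'
      · exact hdne (inv_eq_zero.mp h')
      · exact haw (σinj (by rw [neg_eq_zero.mp h', map_zero]))

end
end NHF

theorem stmt10 (n : ℕ)
    (D : ∀ i, i + 1 < n → Module.End ℤ (MvPolynomial (Fin n) ℤ))
    (hD : ∀ i hi, IsDD n i hi (D i hi))
    (rwd : Equiv.Perm (Fin n) → List ℕ) (hrwd : ∀ w, IsReducedWord n (rwd w) w)
    (c : ((Fin n →₀ ℕ) × Equiv.Perm (Fin n)) →₀ ℤ)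
    (hc : (c.sum fun p a =>
        a • ((LinearMap.mulLeft ℤ (monomial p.1 (1 : ℤ)) :
              Module.End ℤ (MvPolynomial (Fin n) ℤ)) * Dword n D (rwd p.2))) = 0) :
    c = 0 := by
  classical
  by_contra hcne
  have hexp := fun w : Equiv.Perm (Fin n) => NHF.expand n rwd hrwd D hD (rwd w) (hrwd w).1
  choose A hA1 hA2 hA3 hA4 using hexp
  have h0 : ∀ f : NHF.R n, ∑ p ∈ c.support,
      ((c p : NHF.K n)) * (NHF.ι n (monomial p.1 (1 : ℤ)) * NHF.ι n (Dword n D (rwd p.2) f))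
        = 0 := by
    intro f
    have h := LinearMap.congr_fun hc f
    rw [Finsupp.sum] at h
    simp only [LinearMap.sum_apply, LinearMap.smul_apply, Module.End.mul_apply,
      LinearMap.mulLeft_apply, LinearMap.zero_apply] at h
    rw [Finset.sum_congr rfl fun p _ => zsmul_eq_mul
      ((monomial p.1 (1 : ℤ)) * Dword n D (rwd p.2) f) (c p)] at h
    have h' := congrArg (NHF.ι n) h
    rw [map_sum, map_zero] at h'
    simpa only [map_mul, map_intCast, mul_assoc] using h'
  set C : Equiv.Perm (Fin n) → NHF.K n :=
    fun v => ∑ p ∈ c.support, (c p : NHF.K n) * (NHF.ι n (monomial p.1 (1 : ℤ)) * A p.2 v)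
    with hCdef
  have hsum : ∀ f : NHF.R n,
      ∑ v : Equiv.Perm (Fin n), C v * NHF.σ n v (NHF.ι n f) = 0 := by
    intro f
    have e1 : ∀ v : Equiv.Perm (Fin n), C v * NHF.σ n v (NHF.ι n f) =
        ∑ p ∈ c.support, (c p : NHF.K n) *
          (NHF.ι n (monomial p.1 (1 : ℤ)) * (A p.2 v * NHF.σ n v (NHF.ι n f))) := by
      intro v
      simp only [hCdef]
      rw [Finset.sum_mul]
      exact Finset.sum_congr rfl fun p _ => by ring
    calc ∑ v : Equiv.Perm (Fin n), C v * NHF.σ n v (NHF.ι n f)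
        = ∑ v : Equiv.Perm (Fin n), ∑ p ∈ c.support, (c p : NHF.K n) *
            (NHF.ι n (monomial p.1 (1 : ℤ)) * (A p.2 v * NHF.σ n v (NHF.ι n f))) :=
          Finset.sum_congr rfl fun v _ => e1 v
      _ = ∑ p ∈ c.support, ∑ v : Equiv.Perm (Fin n), (c p : NHF.K n) *
            (NHF.ι n (monomial p.1 (1 : ℤ)) * (A p.2 v * NHF.σ n v (NHF.ι n f))) :=
          Finset.sum_comm
      _ = ∑ p ∈ c.support, (c p : NHF.K n) *
            (NHF.ι n (monomial p.1 (1 : ℤ)) * NHF.ι n (Dword n D (rwd p.2) f)) := by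
          refine Finset.sum_congr rfl fun p _ => ?_
          rw [hA1 p.2 f, Finset.mul_sum, Finset.mul_sum]
      _ = 0 := h0 f
  set m : Equiv.Perm (Fin n) → (NHF.R n →* NHF.K n) :=
    fun v => ((NHF.σ n v).comp (NHF.ι n)).toMonoidHom with hmdef
  have hmapp : ∀ v f, m v f = NHF.σ n v (NHF.ι n f) := fun v f => rfl
  have minj : Function.Injective m := by
    intro u v huv
    apply Equiv.ext
    intro j
    have h : m u (X j) = m v (X j) := by rw [huv]
    rw [hmapp, hmapp, NHF.σ_ι, NHF.σ_ι] at h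
    have h2 := NHF.ι_inj n h
    rw [rename_X, rename_X] at h2
    exact X_injective h2
  have li : LinearIndependent (NHF.K n)
      (fun v : Equiv.Perm (Fin n) => (⇑(m v) : NHF.R n → NHF.K n)) :=
    (linearIndependent_monoidHom (NHF.R n) (NHF.K n)).comp m minj
  have hC0 : ∀ v, C v = 0 := by
    refine Fintype.linearIndependent_iff.mp li C ?_
    funext f
    have := hsum f
    simpa only [Finset.sum_apply, Pi.smul_apply, smul_eq_mul, hmapp, Pi.zero_apply] using this
  have hS : (c.support.image Prod.snd).Nonempty :=
    Finset.Nonempty.image (Finsupp.support_nonempty_iff.mpr hcne) _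
  obtain ⟨w, hwS, hwmax⟩ := Finset.exists_max_image (c.support.image Prod.snd) (NHF.len n rwd) hS
  have key : ∀ p ∈ c.support, p.2 ≠ w → A p.2 w = 0 := by
    intro p hp hne
    by_contra h
    have hle := hA2 p.2 w h
    have hmax : NHF.len n rwd p.2 ≤ NHF.len n rwd w := hwmax p.2 (Finset.mem_image_of_mem _ hp)
    have heq : NHF.len n rwd w = (rwd p.2).length := le_antisymm hle hmax
    have h3 := hA3 p.2 w h heq
    rw [(hrwd p.2).2.1] at h3
    exact hne h3.symm
  have hAww : A w w ≠ 0 := by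
    have hw := (hrwd w).2.1
    have h4 := hA4 w (by rw [hw]; rfl)
    rwa [hw] at h4
  have hCw : ∑ p ∈ c.support,
      (c p : NHF.K n) * (NHF.ι n (monomial p.1 (1 : ℤ)) * A p.2 w) = 0 := hC0 w
  rw [← Finset.sum_filter_add_sum_filter_not c.support (fun p => p.2 = w)] at hCw
  have h2z : ∑ p ∈ c.support.filter (fun p => ¬ p.2 = w),
      (c p : NHF.K n) * (NHF.ι n (monomial p.1 (1 : ℤ)) * A p.2 w) = 0 := by
    refine Finset.sum_eq_zero fun p hp => ?_
    obtain ⟨hp1, hp2⟩ := Finset.mem_filter.mp hp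
    rw [key p hp1 hp2, mul_zero, mul_zero]
  rw [h2z, add_zero] at hCw
  have hprod : (∑ p ∈ c.support.filter (fun p => p.2 = w),
      (c p : NHF.K n) * NHF.ι n (monomial p.1 (1 : ℤ))) * A w w = 0 := by
    rw [Finset.sum_mul, ← hCw]
    refine Finset.sum_congr rfl fun p hp => ?_
    rw [(Finset.mem_filter.mp hp).2]
    ring
  have hsum0 : ∑ p ∈ c.support.filter (fun p => p.2 = w),
      (c p : NHF.K n) * NHF.ι n (monomial p.1 (1 : ℤ)) = 0 :=
    (mul_eq_zero.mp hprod).resolve_right hAww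
  have hpoly : ∑ p ∈ c.support.filter (fun p => p.2 = w),
      monomial p.1 (c p) = (0 : NHF.R n) := by
    apply NHF.ι_inj n
    rw [map_sum, map_zero, ← hsum0]
    refine Finset.sum_congr rfl fun p _ => ?_
    have : (monomial p.1 (c p) : NHF.R n) = (c p : NHF.R n) * monomial p.1 (1 : ℤ) := by
      rw [show ((c p : NHF.R n)) = MvPolynomial.C (c p) from rfl, C_mul_monomial, mul_one]
    rw [this, map_mul, map_intCast]
  obtain ⟨p0, hp0, hp02⟩ := Finset.mem_image.mp hwS
  have hcoeff := congrArg (coeff p0.1) hpoly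
  rw [coeff_sum, coeff_zero] at hcoeff
  have hone : ∑ p ∈ c.support.filter (fun p => p.2 = w),
      (if p.1 = p0.1 then c p else 0) = c p0 := by
    rw [Finset.sum_eq_single p0]
    · simp
    · intro p hp hne
      have h2 := (Finset.mem_filter.mp hp).2
      have : ¬ p.1 = p0.1 := fun h => hne (Prod.ext h (h2.trans hp02.symm))
      simp [this]
    · intro h
      exact absurd (Finset.mem_filter.mpr ⟨hp0, hp02⟩) h
  rw [Finset.sum_congr rfl (fun p _ => coeff_monomial p0.1 p.1 (c p)), hone] at hcoeff
  exact Finsupp.mem_support_iff.mp hp0 hcoeff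
end

section
/- The polynomial ring ℤ[x_1,...,x_n] is a free module over the subring Λ_n of symmetric polynomials with basis the set of monomials {x_1^{j_1} ··· x_n^{j_n} : 0 ≤ j_k ≤ n-k}. -/
open MvPolynomial Finset

namespace Stmt13

set_option maxHeartbeats 1000000
set_option linter.unnecessarySimpa false
set_option synthInstance.maxHeartbeats 200000

universe u

variable {R : Type u} [CommRing R]

/-- the staircase index type -/
abbrev Stair (n : ℕ) := {d : Fin n →₀ ℕ // ∀ k : Fin n, d k ≤ n - 1 - (k : ℕ)}

noncomputable instance (n : ℕ) : Fintype (Stair n) := by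
  have h : (setOf fun d : Fin n →₀ ℕ => ∀ k : Fin n, d k ≤ n - 1 - (k : ℕ)).Finite := by
    apply (Set.finite_Iic (Finsupp.equivFunOnFinite.symm (fun k : Fin n => n - 1 - (k : ℕ)))).subset
    intro d hd
    rw [Set.mem_Iic, Finsupp.le_def]
    exact fun i => hd i
  exact h.fintype

/-- split off the first exponent -/
noncomputable def stairEquiv (n : ℕ) : Stair (n + 1) ≃ Fin (n + 1) × Stair n where
  toFun d := (⟨d.1 0, Nat.lt_succ_of_le (by simpa using d.2 0)⟩,
    ⟨Finsupp.tail d.1, fun k => by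
      have := d.2 k.succ
      simpa [Finsupp.tail_apply, Nat.succ_sub_one, Nat.sub_sub, Nat.add_comm] using this⟩)
  invFun p := ⟨Finsupp.cons p.1 p.2.1, fun k => by
    refine Fin.cases ?_ (fun j => ?_) k
    · simpa [Finsupp.cons_zero] using Nat.lt_succ_iff.mp p.1.2
    · have := p.2.2 j
      simpa [Finsupp.cons_succ, Nat.sub_sub, Nat.add_comm] using this⟩
  left_inv d := Subtype.ext (Finsupp.cons_tail d.1)
  right_inv p := by
    ext
    · exact Finsupp.cons_zero _ _
    · simp [Finsupp.tail_cons]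

/-- the variable-splitting equivalence -/
noncomputable def E (n : ℕ) (R : Type u) [CommRing R] :
    MvPolynomial (Fin (n + 1)) R ≃ₐ[R] MvPolynomial (Fin n) (Polynomial R) :=
  (renameEquiv R (_root_.finSuccEquiv n)).trans (optionEquivRight R (Fin n))

@[simp] lemma E_X_zero (n : ℕ) : E n R (X 0) = C Polynomial.X := by
  simp [E, optionEquivRight_X_none]

@[simp] lemma E_X_succ (n : ℕ) (i : Fin n) : E n R (X i.succ) = X i := by
  simp [E, optionEquivRight_X_some]

@[simp] lemma E_C (n : ℕ) (r : R) : E n R (C r) = C (Polynomial.C r) := by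
  simp [E, optionEquivRight_C]

/-- permutation of `Fin (n+1)` fixing `0` induced by a permutation of `Fin n` -/
def permSucc {n : ℕ} (σ : Equiv.Perm (Fin n)) : Equiv.Perm (Fin (n + 1)) :=
  ((_root_.finSuccEquiv n).symm.permCongr σ.optionCongr)

@[simp] lemma permSucc_zero {n : ℕ} (σ : Equiv.Perm (Fin n)) : permSucc σ 0 = 0 := by
  simp [permSucc, Equiv.permCongr_apply]

@[simp] lemma permSucc_succ {n : ℕ} (σ : Equiv.Perm (Fin n)) (i : Fin n) :
    permSucc σ i.succ = (σ i).succ := by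
  simp [permSucc, Equiv.permCongr_apply]

lemma E_rename {n : ℕ} (σ : Equiv.Perm (Fin n)) (p : MvPolynomial (Fin (n + 1)) R) :
    rename σ (E n R p) = E n R (rename (permSucc σ) p) := by
  induction p using MvPolynomial.induction_on with
  | C a => simp
  | add p q hp hq => simp [map_add, hp, hq]
  | mul_X p i hp =>
    have hX : ∀ i : Fin (n + 1), rename σ (E n R (X i)) = E n R (X (permSucc σ i)) := by
      intro i
      refine Fin.cases ?_ (fun j => ?_) i
      · rw [permSucc_zero, E_X_zero]
        simp
      · rw [permSucc_succ, E_X_succ, E_X_succ, rename_X]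
    rw [map_mul, map_mul, hp, map_mul, rename_X, hX, map_mul]

lemma isSymmetric_E {n : ℕ} {p : MvPolynomial (Fin (n + 1)) R} (hp : p.IsSymmetric) :
    (E n R p).IsSymmetric := by
  intro σ
  rw [E_rename, hp (permSucc σ)]

lemma cons_zero_eq_embDomain {n : ℕ} (d : Fin n →₀ ℕ) :
    Finsupp.cons 0 d = Finsupp.embDomain ⟨Fin.succ, Fin.succ_injective n⟩ d := by
  ext k
  refine Fin.cases ?_ (fun j => ?_) k
  · rw [Finsupp.cons_zero]
    symm
    rw [Finsupp.embDomain_notin_range]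
    simp [Fin.succ_ne_zero]
  · rw [Finsupp.cons_succ]
    exact (Finsupp.embDomain_apply_self _ _ _).symm

lemma E_monomial_cons_zero {n : ℕ} (d : Fin n →₀ ℕ) :
    E n R (monomial (Finsupp.cons 0 d) 1) = monomial d 1 := by
  rw [monomial_eq, monomial_eq, map_mul, E_C,
    cons_zero_eq_embDomain, map_finsuppProd, Finsupp.prod_embDomain]
  simp [Finsupp.prod, E_X_succ]

lemma monomial_cons {n : ℕ} (i : ℕ) (d : Fin n →₀ ℕ) :
    monomial (Finsupp.cons i d) (1 : R) = X 0 ^ i * monomial (Finsupp.cons 0 d) 1 := by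
  have h : Finsupp.cons i d = Finsupp.single 0 i + Finsupp.cons 0 d := by
    ext k
    refine Fin.cases ?_ (fun j => ?_) k
    · simp [Finsupp.cons_zero]
    · simp [Finsupp.cons_succ, Finsupp.single_apply, (Fin.succ_ne_zero j).symm]
  rw [h, X_pow_eq_monomial, monomial_mul, one_mul]

lemma E_rename_succ_esymm (n k : ℕ) :
    E n R (rename Fin.succ (esymm (Fin n) R k)) = esymm (Fin n) (Polynomial R) k := by
  simp [esymm, map_sum, map_prod, E_X_succ]

def succEmb (n : ℕ) : Fin n ↪ Fin (n + 1) := ⟨Fin.succ, Fin.succ_injective n⟩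

lemma sum_prod_map (n j : ℕ) :
    ∑ t ∈ powersetCard j ((univ : Finset (Fin n)).map (succEmb n)),
      ∏ i ∈ t, (X i : MvPolynomial (Fin (n + 1)) R)
      = rename Fin.succ (esymm (Fin n) R j) := by
  rw [powersetCard_map, Finset.sum_map, esymm, map_sum]
  apply Finset.sum_congr rfl
  intro t _
  rw [map_prod, show (Finset.mapEmbedding (succEmb n)).toEmbedding t = t.map (succEmb n) from rfl, Finset.prod_map]
  simp [succEmb]

lemma esymm_rec (n k : ℕ) :
    esymm (Fin (n + 1)) R (k + 1)
      = rename Fin.succ (esymm (Fin n) R (k + 1))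
        + X 0 * rename Fin.succ (esymm (Fin n) R k) := by
  classical
  have h0 : (0 : Fin (n + 1)) ∉ (univ : Finset (Fin n)).map (succEmb n) := by
    simp [succEmb, Fin.succ_ne_zero, eq_comm]
  have huniv : (univ : Finset (Fin (n + 1))) = insert 0 ((univ : Finset (Fin n)).map (succEmb n)) := by
    rw [Fin.univ_succ, Finset.cons_eq_insert]
    rfl
  rw [esymm, huniv, powersetCard_succ_insert h0, Finset.sum_union, sum_prod_map]
  · congr 1
    rw [Finset.sum_image (by
      intro u hu v hv huv
      have h0u : (0 : Fin (n + 1)) ∉ u := fun h => h0 ((Finset.mem_powersetCard.mp hu).1 h)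
      have h0v : (0 : Fin (n + 1)) ∉ v := fun h => h0 ((Finset.mem_powersetCard.mp hv).1 h)
      rw [← Finset.erase_insert h0u, ← Finset.erase_insert h0v, huv]),
      ← sum_prod_map n k, Finset.mul_sum]
    apply Finset.sum_congr rfl
    intro t ht
    have h0t : (0 : Fin (n + 1)) ∉ t := fun h => h0 ((Finset.mem_powersetCard.mp ht).1 h)
    rw [Finset.prod_insert h0t]
  · rw [Finset.disjoint_left]
    intro t ht ht'
    obtain ⟨u, hu, rfl⟩ := Finset.mem_image.mp ht'
    exact h0 ((Finset.mem_powersetCard.mp ht).1 (Finset.mem_insert_self 0 u))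

section SPA
variable (n : ℕ)

/-- the product `∏ (t - x_j)` -/
noncomputable def Ppoly : Polynomial (MvPolynomial (Fin (n + 1)) R) :=
  ∏ j : Fin (n + 1), (Polynomial.X - Polynomial.C (X j))

lemma Ppoly_coeff_symmetric (k : ℕ) : ((Ppoly (R := R) n).coeff k).IsSymmetric := by
  intro σ
  have hmap : (Ppoly (R := R) n).map
      ((rename (σ : Fin (n+1) → Fin (n+1)) :
        MvPolynomial (Fin (n+1)) R →ₐ[R] MvPolynomial (Fin (n+1)) R) :
      MvPolynomial (Fin (n+1)) R →+* MvPolynomial (Fin (n+1)) R) = Ppoly n := by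
    rw [Ppoly, Polynomial.map_prod]
    rw [← Equiv.prod_comp σ (fun j => Polynomial.X - Polynomial.C (X j))]
    apply Finset.prod_congr rfl
    intro j _
    simp
  conv_rhs => rw [← hmap]
  rw [Polynomial.coeff_map]
  rfl

lemma Ppoly_monic : (Ppoly (R := R) n).Monic :=
  Polynomial.monic_prod_of_monic _ _ (fun j _ => Polynomial.monic_X_sub_C (X j))

lemma Ppoly_natDegree [Nontrivial R] : (Ppoly (R := R) n).natDegree = n + 1 := by
  rw [Ppoly, Polynomial.natDegree_prod_of_monic _ _ (fun j _ => Polynomial.monic_X_sub_C (X j))]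
  simp [Polynomial.natDegree_X_sub_C]

lemma Ppoly_eval_X_zero : (Ppoly (R := R) n).eval (X 0) = 0 := by
  rw [Ppoly, Polynomial.eval_prod]
  apply Finset.prod_eq_zero (Finset.mem_univ (0 : Fin (n + 1)))
  simp

/-- `Ppoly` as a polynomial with coefficients in the symmetric subalgebra -/
noncomputable def Qpoly : Polynomial (symmetricSubalgebra (Fin (n + 1)) R) :=
  ∑ i ∈ Finset.range (n + 2),
    Polynomial.C (⟨(Ppoly (R := R) n).coeff i, Ppoly_coeff_symmetric n i⟩ :
      symmetricSubalgebra (Fin (n + 1)) R) * Polynomial.X ^ i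

lemma Qpoly_map [Nontrivial R] :
    (Qpoly (R := R) n).map (algebraMap (symmetricSubalgebra (Fin (n + 1)) R)
      (MvPolynomial (Fin (n + 1)) R)) = Ppoly n := by
  rw [Qpoly, Polynomial.map_sum]
  have := (Ppoly (R := R) n).as_sum_range' (n + 2) (by rw [Ppoly_natDegree]; omega)
  conv_rhs => rw [this]
  apply Finset.sum_congr rfl
  intro i _
  rw [Polynomial.map_mul, Polynomial.map_C, Polynomial.map_pow, Polynomial.map_X,
    Polynomial.C_mul_X_pow_eq_monomial]
  rfl

lemma Qpoly_monic [Nontrivial R] : (Qpoly (R := R) n).Monic := by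
  apply Polynomial.monic_of_injective (f := algebraMap (symmetricSubalgebra (Fin (n + 1)) R)
    (MvPolynomial (Fin (n + 1)) R)) (Subtype.val_injective)
  rw [Qpoly_map]
  exact Ppoly_monic n

lemma Qpoly_natDegree [Nontrivial R] : (Qpoly (R := R) n).natDegree = n + 1 := by
  have h := Polynomial.natDegree_map_eq_of_injective
    (f := algebraMap (symmetricSubalgebra (Fin (n + 1)) R) (MvPolynomial (Fin (n + 1)) R))
    (Subtype.val_injective) (Qpoly (R := R) n)
  rw [Qpoly_map] at h
  rw [← h, Ppoly_natDegree]

lemma Qpoly_aeval [Nontrivial R] :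
    Polynomial.aeval (X 0 : MvPolynomial (Fin (n + 1)) R) (Qpoly (R := R) n) = 0 := by
  rw [Polynomial.aeval_def, ← Polynomial.eval_map, Qpoly_map]
  exact Ppoly_eval_X_zero n

lemma aeval_C_X (c : Polynomial R) :
    Polynomial.aeval (C Polynomial.X : MvPolynomial (Fin n) (Polynomial R)) c = C c := by
  induction c using Polynomial.induction_on' with
  | add p q hp hq => rw [map_add, map_add, hp, hq]
  | monomial k a =>
    rw [Polynomial.aeval_monomial, ← map_pow,
      IsScalarTower.algebraMap_apply R (Polynomial R) (MvPolynomial (Fin n) (Polynomial R)),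
      show (algebraMap (Polynomial R) (MvPolynomial (Fin n) (Polynomial R))) = C from rfl,
      ← map_mul]
    congr 1
    rw [show (algebraMap R (Polynomial R)) a = Polynomial.C a from rfl,
      Polynomial.C_mul_X_pow_eq_monomial]

lemma Esymm_symm_C (c : Polynomial R) :
    (E n R).symm (C c) = Polynomial.aeval (X 0 : MvPolynomial (Fin (n + 1)) R) c := by
  apply (E n R).injective
  rw [AlgEquiv.apply_symm_apply]
  have h := Polynomial.aeval_algHom_apply (E n R) (X 0) c
  rw [← h, E_X_zero, aeval_C_X]


end SPA

lemma spa {n : ℕ} [Nontrivial R] (p : MvPolynomial (Fin (n + 1)) R) (hp : (E n R p).IsSymmetric) :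
    ∃ a : Fin (n + 1) → MvPolynomial (Fin (n + 1)) R,
      (∀ i, (a i).IsSymmetric) ∧ p = ∑ i : Fin (n + 1), a i * X 0 ^ (i : ℕ) := by
  classical
  set A := symmetricSubalgebra (Fin (n + 1)) R with hA
  have hFA : ∀ k : ℕ, rename Fin.succ (esymm (Fin n) R k)
      ∈ Algebra.adjoin A {(X 0 : MvPolynomial (Fin (n+1)) R)} := by
    intro k
    induction k with
    | zero => simpa using Subalgebra.one_mem (Algebra.adjoin A {(X 0 : MvPolynomial (Fin (n+1)) R)})
    | succ k ih =>
      have heq : rename Fin.succ (esymm (Fin n) R (k+1))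
          = esymm (Fin (n+1)) R (k+1) - X 0 * rename Fin.succ (esymm (Fin n) R k) := by
        rw [esymm_rec]; ring
      rw [heq]
      refine Subalgebra.sub_mem _ ?_
        (Subalgebra.mul_mem _ (Algebra.subset_adjoin (Set.mem_singleton _)) ih)
      exact Subalgebra.algebraMap_mem (Algebra.adjoin A {(X 0 : MvPolynomial (Fin (n+1)) R)})
        (⟨esymm (Fin (n+1)) R (k+1), esymm_isSymmetric _ _ _⟩ : A)
  have hmem : ∀ w : MvPolynomial (Fin n) (Polynomial R),
      (E n R).symm (aeval (fun i : Fin n => esymm (Fin n) (Polynomial R) ((i : ℕ) + 1)) w)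
        ∈ Algebra.adjoin A {(X 0 : MvPolynomial (Fin (n+1)) R)} := by
    intro w
    induction w using MvPolynomial.induction_on with
    | C c =>
      rw [aeval_C, show algebraMap (Polynomial R) (MvPolynomial (Fin n) (Polynomial R)) = C
        from rfl, Esymm_symm_C]
      rw [Algebra.adjoin_singleton_eq_range_aeval]
      refine ⟨c.map (algebraMap R A), ?_⟩
      show Polynomial.aeval (X 0 : MvPolynomial (Fin (n+1)) R) (c.map (algebraMap R A))
        = Polynomial.aeval (X 0 : MvPolynomial (Fin (n+1)) R) c
      rw [Polynomial.aeval_map_algebraMap]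
    | add p q hp hq =>
      rw [map_add, map_add]
      exact Subalgebra.add_mem _ hp hq
    | mul_X w i hw =>
      rw [map_mul, map_mul]
      refine Subalgebra.mul_mem _ hw ?_
      rw [aeval_X, ← E_rename_succ_esymm, AlgEquiv.symm_apply_apply]
      exact hFA ((i : ℕ) + 1)
  obtain ⟨w, hw⟩ := esymmAlgHom_surjective (σ := Fin n) (R := Polynomial R) (n := n)
    (by simp) ⟨E n R p, hp⟩
  have hp2 : p ∈ Algebra.adjoin A {(X 0 : MvPolynomial (Fin (n+1)) R)} := by
    have h := hmem w
    have h2 : aeval (fun i : Fin n => esymm (Fin n) (Polynomial R) ((i : ℕ) + 1)) w = E n R p := by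
      have := esymmAlgHom_apply (σ := Fin n) (R := Polynomial R) (n := n) w
      rw [hw] at this
      exact this.symm
    rw [h2, AlgEquiv.symm_apply_apply] at h
    exact h
  rw [Algebra.adjoin_singleton_eq_range_aeval] at hp2
  obtain ⟨g, hg0⟩ := hp2
  have hg : Polynomial.aeval (X 0 : MvPolynomial (Fin (n+1)) R) g = p := hg0
  set r := g %ₘ Qpoly n with hr
  have hdeg : r.natDegree < n + 1 := by
    refine lt_of_lt_of_le (Polynomial.natDegree_modByMonic_lt _ (Qpoly_monic n) ?_)
      (le_of_eq (Qpoly_natDegree n))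
    intro h1
    have h2 := Qpoly_natDegree n (R := R)
    rw [h1] at h2
    simp at h2
  have hpr : p = Polynomial.aeval (X 0 : MvPolynomial (Fin (n+1)) R) r := by
    conv_lhs => rw [← hg, ← Polynomial.modByMonic_add_div g (Qpoly n)]
    rw [map_add, map_mul, Qpoly_aeval, zero_mul, add_zero]
  refine ⟨fun i => ((r.coeff (i : ℕ) : A) : MvPolynomial (Fin (n+1)) R),
    fun i => (r.coeff (i : ℕ)).2, ?_⟩
  rw [hpr, Polynomial.aeval_eq_sum_range' hdeg, ← Fin.sum_univ_eq_sum_range]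
  apply Finset.sum_congr rfl
  intro i _
  rw [Algebra.smul_def]
  rfl
lemma vl [IsDomain R] {n : ℕ} (c : Fin (n + 1) → MvPolynomial (Fin (n + 1)) R)
    (hc : ∀ i, (c i).IsSymmetric)
    (h : ∑ i : Fin (n + 1), c i * X 0 ^ (i : ℕ) = 0) : ∀ i, c i = 0 := by
  classical
  set Pc : Polynomial (MvPolynomial (Fin (n + 1)) R) :=
    ∑ i : Fin (n + 1), Polynomial.C (c i) * Polynomial.X ^ (i : ℕ) with hPc
  have heval : ∀ j : Fin (n + 1), Pc.eval (X j) = 0 := by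
    intro j
    have hj := congrArg (rename ((Equiv.swap 0 j : Equiv.Perm (Fin (n + 1))) :
      Fin (n + 1) → Fin (n + 1))) h
    rw [map_sum, map_zero] at hj
    have hj2 : ∑ i : Fin (n + 1), c i * X j ^ (i : ℕ) = 0 := by
      rw [← hj]
      apply Finset.sum_congr rfl
      intro i _
      rw [map_mul, map_pow, rename_X, hc i (Equiv.swap 0 j), Equiv.swap_apply_left]
    rw [hPc, Polynomial.eval_finset_sum]
    simpa only [Polynomial.eval_mul, Polynomial.eval_pow, Polynomial.eval_C,
      Polynomial.eval_X] using hj2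
  have hPc0 : Pc = 0 := by
    refine Polynomial.eq_zero_of_natDegree_lt_card_of_eval_eq_zero Pc
      (MvPolynomial.X_injective) heval ?_
    rw [Fintype.card_fin]
    refine Nat.lt_succ_of_le ?_
    refine Polynomial.natDegree_sum_le_of_forall_le _ _ ?_
    intro i _
    exact le_trans (Polynomial.natDegree_C_mul_X_pow_le _ _) (Nat.lt_succ_iff.mp i.2)
  intro i
  have hcoeff : Pc.coeff (i : ℕ) = c i := by
    rw [hPc, Polynomial.finset_sum_coeff]
    rw [Finset.sum_eq_single i]
    · simp
    · intro j _ hji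
      rw [Polynomial.coeff_C_mul, Polynomial.coeff_X_pow, if_neg (by
        simpa [Fin.val_eq_val] using (Ne.symm hji)), mul_zero]
    · intro hi
      exact absurd (Finset.mem_univ i) hi
  rw [← hcoeff, hPc0, Polynomial.coeff_zero]

lemma isSymmetric_pow {σ : Type*} {p : MvPolynomial σ R} (hp : p.IsSymmetric) (k : ℕ) :
    (p ^ k).IsSymmetric := by
  induction k with
  | zero => simpa using MvPolynomial.IsSymmetric.one
  | succ k ih => rw [pow_succ]; exact ih.mul hp

lemma isSymmetric_C' {σ : Type*} (r : R) : (C r : MvPolynomial σ R).IsSymmetric :=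
  MvPolynomial.IsSymmetric.C r

lemma E_symm_monomial {n : ℕ} (d : Fin n →₀ ℕ) :
    (E n R).symm (monomial d 1) = monomial (Finsupp.cons 0 d) 1 := by
  apply (E n R).injective
  rw [AlgEquiv.apply_symm_apply, E_monomial_cons_zero]

lemma regroup {n : ℕ} (f : Stair (n + 1) → MvPolynomial (Fin (n + 1)) R) :
    ∑ d : Stair (n + 1), f d * monomial d.1 1
      = ∑ d' : Stair n, (∑ i : Fin (n + 1), f ((stairEquiv n).symm (i, d')) * X 0 ^ (i : ℕ))
          * monomial (Finsupp.cons 0 d'.1) 1 := by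
  rw [← Equiv.sum_comp ((stairEquiv n).symm) (fun d => f d * monomial d.1 1),
    Fintype.sum_prod_type, Finset.sum_comm]
  apply Finset.sum_congr rfl
  intro d' _
  rw [Finset.sum_mul]
  apply Finset.sum_congr rfl
  intro i _
  have h1 : ((stairEquiv n).symm (i, d')).1 = Finsupp.cons (i : ℕ) d'.1 := rfl
  rw [h1, monomial_cons, mul_assoc]

/-- spanning -/
lemma sp : ∀ (n : ℕ) {R : Type u} [CommRing R] [IsDomain R] (p : MvPolynomial (Fin n) R),
    ∃ c : Stair n → MvPolynomial (Fin n) R, (∀ d, (c d).IsSymmetric) ∧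
      p = ∑ d : Stair n, c d * monomial d.1 1 := by
  intro n
  induction n with
  | zero =>
    intro R _ _ p
    haveI : Unique (Stair 0) := ⟨⟨⟨0, fun k => k.elim0⟩⟩, fun a => Subtype.ext (by
      ext k; exact k.elim0)⟩
    refine ⟨fun _ => p, fun _ => fun e => ?_, ?_⟩
    · rw [Subsingleton.elim e (Equiv.refl (Fin 0))]
      simp [rename_id]
    · rw [Fintype.sum_subsingleton _ (default : Stair 0)]
      have : (default : Stair 0).1 = 0 := by ext k; exact k.elim0
      rw [this]
      simp
  | succ n ih =>
    intro R _ _ p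
    obtain ⟨c', hc'sym, hc'⟩ := ih (R := Polynomial R) (E n R p)
    have key := fun d' : Stair n => spa ((E n R).symm (c' d')) (by
      rw [AlgEquiv.apply_symm_apply]; exact hc'sym d')
    choose a ha hsum using key
    refine ⟨fun d => a (stairEquiv n d).2 (stairEquiv n d).1,
      fun d => ha _ _, ?_⟩
    rw [regroup]
    have h2 : ∀ d' : Stair n,
        (∑ i : Fin (n + 1), a (stairEquiv n ((stairEquiv n).symm (i, d'))).2
            (stairEquiv n ((stairEquiv n).symm (i, d'))).1 * X 0 ^ (i : ℕ))
          = (E n R).symm (c' d') := by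
      intro d'
      rw [hsum d']
      apply Finset.sum_congr rfl
      intro i _
      rw [Equiv.apply_symm_apply]
    calc p = (E n R).symm (E n R p) := ((E n R).symm_apply_apply p).symm
      _ = (E n R).symm (∑ d' : Stair n, c' d' * monomial d'.1 1) := by rw [← hc']
      _ = ∑ d' : Stair n, (E n R).symm (c' d') * monomial (Finsupp.cons 0 d'.1) 1 := by
          rw [map_sum]
          apply Finset.sum_congr rfl
          intro d' _
          rw [map_mul, E_symm_monomial]
      _ = _ := by
          apply Finset.sum_congr rfl
          intro d' _
          rw [h2 d']

/-- linear independence -/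
lemma li : ∀ (n : ℕ) {R : Type u} [CommRing R] [IsDomain R]
    (c : Stair n → MvPolynomial (Fin n) R), (∀ d, (c d).IsSymmetric) →
    (∑ d : Stair n, c d * monomial d.1 1) = 0 → ∀ d, c d = 0 := by
  intro n
  induction n with
  | zero =>
    intro R _ _ c hc h0 d
    haveI : Unique (Stair 0) := ⟨⟨⟨0, fun k => k.elim0⟩⟩, fun a => Subtype.ext (by
      ext k; exact k.elim0)⟩
    rw [Fintype.sum_subsingleton _ (default : Stair 0)] at h0
    have hd : d = default := Subsingleton.elim _ _
    have hd1 : (default : Stair 0).1 = 0 := by ext k; exact k.elim0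
    rw [hd1] at h0
    simpa [hd] using h0
  | succ n ih =>
    intro R _ _ c hc h0 d
    set g : Stair n → MvPolynomial (Fin (n + 1)) R :=
      fun d' => ∑ i : Fin (n + 1), c ((stairEquiv n).symm (i, d')) * X 0 ^ (i : ℕ) with hg
    rw [regroup] at h0
    have h1 : ∑ d' : Stair n, E n R (g d') * monomial d'.1 1 = 0 := by
      have := congrArg (E n R) h0
      rw [map_sum, map_zero] at this
      rw [← this]
      apply Finset.sum_congr rfl
      intro d' _
      rw [map_mul, ← E_monomial_cons_zero d'.1]
    have hgsym : ∀ d', (E n R (g d')).IsSymmetric := by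
      intro d'
      rw [hg]
      simp only [map_sum, map_mul, map_pow, E_X_zero]
      apply MvPolynomial.symmetricSubalgebra _ _ |>.sum_mem
      intro i _
      exact ((isSymmetric_E (hc _)).mul (isSymmetric_pow (isSymmetric_C' _) _))
    have hgz : ∀ d', g d' = 0 := by
      intro d'
      have := ih (R := Polynomial R) (fun d' => E n R (g d')) hgsym h1 d'
      exact (E n R).injective (by simpa using this)
    have := vl (fun i => c ((stairEquiv n).symm (i, (stairEquiv n d).2)))
      (fun i => hc _) (hgz (stairEquiv n d).2)
    have hfin := this (stairEquiv n d).1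
    rwa [Prod.mk.eta, Equiv.symm_apply_apply] at hfin


end Stmt13

open Stmt13 in
theorem stmt13 (n : ℕ) :
    ∃ b : Module.Basis {d : Fin n →₀ ℕ // ∀ k : Fin n, d k ≤ n - 1 - (k : ℕ)}
        (symmetricSubalgebra (Fin n) ℤ) (MvPolynomial (Fin n) ℤ),
      ∀ d, b d = monomial d.1 1 := by
  classical
  set A := symmetricSubalgebra (Fin n) ℤ with hA
  set v : Stair n → MvPolynomial (Fin n) ℤ := fun d => monomial d.1 1 with hv
  have hsmul : ∀ (q : MvPolynomial (Fin n) ℤ) (hq : q.IsSymmetric) (x : MvPolynomial (Fin n) ℤ),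
      (⟨q, hq⟩ : A) • x = q * x := by
    intro q hq x
    rw [Algebra.smul_def]
    rfl
  have hli : LinearIndependent A v := by
    rw [linearIndependent_iff']
    intro s gcoef hsum d hd
    set cfull : Stair n → MvPolynomial (Fin n) ℤ :=
      fun e => if e ∈ s then (gcoef e : MvPolynomial (Fin n) ℤ) else 0 with hcfull
    have hsymm : ∀ e, (cfull e).IsSymmetric := by
      intro e
      by_cases h : e ∈ s
      · rw [hcfull]
        simp only [if_pos h]
        exact (gcoef e).2
      · simp [hcfull, h]
    have h0 : ∑ e : Stair n, cfull e * v e = 0 := by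
      have step : ∀ e : Stair n, cfull e * v e
          = if e ∈ s then (gcoef e : MvPolynomial (Fin n) ℤ) * v e else 0 := by
        intro e
        by_cases h : e ∈ s <;> simp [hcfull, h]
      rw [Finset.sum_congr rfl (fun e _ => step e), Finset.sum_ite_mem,
        Finset.univ_inter]
      rw [← hsum]
      apply Finset.sum_congr rfl
      intro e _
      rw [← hsmul (gcoef e) (gcoef e).2]
    have hz := li n cfull hsymm h0 d
    rw [hcfull] at hz
    simp only [hd, if_pos] at hz
    exact Subtype.ext hz
  have hspan : ⊤ ≤ Submodule.span A (Set.range v) := by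
    intro p _
    obtain ⟨c, hcsym, hc⟩ := sp n p
    rw [hc]
    apply Submodule.sum_mem
    intro d _
    rw [← hsmul (c d) (hcsym d)]
    exact Submodule.smul_mem _ _ (Submodule.subset_span ⟨d, rfl⟩)
  exact ⟨Module.Basis.mk hli hspan, fun d => Module.Basis.mk_apply hli hspan d⟩
end

section
/- Let R = ℤ[r_1, r_2, ...] and R_n = R[x_1,...,x_n]. The R-linear map α(v_n) : R_n → R_{n-1} defined on monomials by x_1^{i_1}···x_{n-1}^{i_{n-1}} x_n^{i_n} ↦ x_1^{i_1}···x_{n-1}^{i_{n-1}} r_{i_n} (with r_0 := 1) satisfies the relation (F): α(v_{n-1}) ∘ α(v_n) = α(v_{n-1}) ∘ α(v_n) ∘ s_{n-1}, where s_{n-1} is the operator on R_n swapping x_{n-1} and x_n. -/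
open MvPolynomial

/-- The generators `r_i` of `R = ℤ[r_1, r_2, ...]`, with `r_0 = 1`. -/
noncomputable def rgen (i : ℕ) : MvPolynomial ℕ ℤ := if i = 0 then 1 else X i

/-- `A` is the `R`-linear map `α(v_{n+1}) : R_{n+1} → R_n` sending
`x_1^{i_1} ⋯ x_n^{i_n} x_{n+1}^{i_{n+1}}` to `x_1^{i_1} ⋯ x_n^{i_n} r_{i_{n+1}}`. -/
def IsAlpha (n : ℕ)
    (A : MvPolynomial (Fin (n + 1)) (MvPolynomial ℕ ℤ) →ₗ[MvPolynomial ℕ ℤ]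
         MvPolynomial (Fin n) (MvPolynomial ℕ ℤ)) : Prop :=
  ∀ d : Fin (n + 1) →₀ ℕ,
    A (monomial d 1) =
      C (rgen (d (Fin.last n))) *
        monomial (Finsupp.equivFunOnFinite.symm fun k : Fin n => d k.castSucc) 1

theorem stmt17 (n : ℕ)
    (A1 : MvPolynomial (Fin (n + 2)) (MvPolynomial ℕ ℤ) →ₗ[MvPolynomial ℕ ℤ]
          MvPolynomial (Fin (n + 1)) (MvPolynomial ℕ ℤ))
    (A2 : MvPolynomial (Fin (n + 1)) (MvPolynomial ℕ ℤ) →ₗ[MvPolynomial ℕ ℤ]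
          MvPolynomial (Fin n) (MvPolynomial ℕ ℤ))
    (h1 : IsAlpha (n + 1) A1) (h2 : IsAlpha n A2) :
    A2 ∘ₗ A1 = A2 ∘ₗ A1 ∘ₗ
      (rename (Equiv.swap (Fin.last (n + 1)) ((Fin.last n).castSucc))).toLinearMap := by
  apply (MvPolynomial.basisMonomials _ _).ext
  intro d
  set σ : Fin (n+2) ≃ Fin (n+2) := Equiv.swap (Fin.last (n + 1)) ((Fin.last n).castSucc) with hσ
  have key : ∀ e : Fin (n+2) →₀ ℕ, (A2 ∘ₗ A1) (monomial e 1) =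
      (C (rgen (e (Fin.last (n+1)))) * C (rgen (e ((Fin.last n).castSucc)))) *
        monomial (Finsupp.equivFunOnFinite.symm fun k : Fin n => e k.castSucc.castSucc) 1 := by
    intro e
    rw [LinearMap.comp_apply, h1 e, ← MvPolynomial.smul_eq_C_mul, map_smul, h2,
      MvPolynomial.smul_eq_C_mul]
    simp only [Finsupp.coe_equivFunOnFinite_symm]
    ring
  simp only [MvPolynomial.coe_basisMonomials]
  have rhs : (A2 ∘ₗ A1 ∘ₗ (rename (σ : Fin (n+2) → Fin (n+2))).toLinearMap) (monomial d 1)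
      = (A2 ∘ₗ A1) (monomial (Finsupp.mapDomain σ d) 1) := by
    simp [MvPolynomial.rename_monomial]
  rw [rhs, key, key]
  have hmap : ∀ i, (Finsupp.mapDomain σ d) i = d (σ i) := by
    intro i
    rw [Finsupp.mapDomain_equiv_apply]
    congr 1
  rw [hmap, hmap]
  have h1' : σ (Fin.last (n+1)) = (Fin.last n).castSucc := Equiv.swap_apply_left _ _
  have h2' : σ ((Fin.last n).castSucc) = Fin.last (n+1) := Equiv.swap_apply_right _ _
  rw [h1', h2']
  have hfix : ∀ k : Fin n, σ (k.castSucc.castSucc) = k.castSucc.castSucc := by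
    intro k
    apply Equiv.swap_apply_of_ne_of_ne
    · exact (Fin.castSucc_lt_last k.castSucc).ne
    · exact fun h => (Fin.castSucc_lt_last k).ne (Fin.castSucc_injective _ h)
  have : (fun k : Fin n => (Finsupp.mapDomain σ d) k.castSucc.castSucc) =
      fun k : Fin n => d k.castSucc.castSucc := by
    funext k; rw [hmap, hfix]
  rw [this]
  ring
end

section
/- Let N be the NH_n-bimodule NH_n ⊗_{NH_{n-1}} NH_n, free as a left NH_n-module with basis b_{i,k} = 1 ⊗ (x_n^i ∂_{n-1}∂_{n-2}···∂_{n-k}) for i ≥ 0 and 0 ≤ k ≤ n-1 (with the empty product for k = 0). Then the center of this bimodule is trivial: if c ∈ N satisfies a·c = c·a for all a ∈ NH_n, then c = 0. -/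
open MvPolynomial

/-- The nilHecke algebra `NH_n`, realized as the subalgebra of endomorphisms of
`ℤ[x_1,…,x_n]` generated by the multiplication operators and the divided difference
operators. -/
noncomputable def NHalg (n : ℕ)
    (D : ∀ i, i + 1 < n → Module.End ℤ (MvPolynomial (Fin n) ℤ)) :
    Subalgebra ℤ (Module.End ℤ (MvPolynomial (Fin n) ℤ)) :=
  Algebra.adjoin ℤ
    ({a | ∃ j, ∃ hj : j < n, a = Xmul n j hj} ∪ {a | ∃ i, ∃ hi : i + 1 < n, a = D i hi})

/-- The subalgebra `NH_{n-1} ⊂ NH_n` generated by `x_1,…,x_{n-1}` and `∂_1,…,∂_{n-2}`. -/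
noncomputable def NHalg' (n : ℕ)
    (D : ∀ i, i + 1 < n → Module.End ℤ (MvPolynomial (Fin n) ℤ)) :
    Subalgebra ℤ (Module.End ℤ (MvPolynomial (Fin n) ℤ)) :=
  Algebra.adjoin ℤ
    ({a | ∃ j, ∃ hj : j + 1 < n, a = Xmul n j (Nat.lt_of_succ_lt hj)} ∪
     {a | ∃ i, ∃ hi : i + 2 < n, a = D i (Nat.lt_of_succ_lt hi)})

/-- The operator `∂_{n-1} ∂_{n-2} ⋯ ∂_{n-k}` (in 1-indexed notation). -/
noncomputable def chainD (n : ℕ)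
    (D : ∀ i, i + 1 < n → Module.End ℤ (MvPolynomial (Fin n) ℤ)) (k : ℕ) :
    Module.End ℤ (MvPolynomial (Fin n) ℤ) :=
  ((List.range k).map fun j => if h : n - 2 - j + 1 < n then D (n - 2 - j) h else 1).prod

section Rels
variable {n : ℕ} {D : ∀ i, i + 1 < n → Module.End ℤ (MvPolynomial (Fin n) ℤ)}

abbrev Pl (n : ℕ) := MvPolynomial (Fin n) ℤ

lemma cancelX {a b : Fin n} (hab : a ≠ b) {p q : Pl n}
    (h : (X a - X b) * p = (X a - X b) * q) : p = q := by
  refine mul_left_cancel₀ (sub_ne_zero.2 ?_) h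
  exact fun he => hab (MvPolynomial.X_injective he)

lemma swapVar_X {i : ℕ} (hi : i + 1 < n) (j : Fin n) :
    swapVar n i hi (X j) = X (Equiv.swap ⟨i, Nat.lt_of_succ_lt hi⟩ ⟨i+1, hi⟩ j) := by
  simp [swapVar]

lemma Xmul_apply {j : ℕ} (hj : j < n) (f : Pl n) :
    Xmul n j hj f = X ⟨j, hj⟩ * f := rfl

-- R1 : D_i x_i = x_{i+1} D_i + 1
lemma R1 (hD : ∀ i hi, IsDD n i hi (D i hi)) (i : ℕ) (hi : i + 1 < n) :
    D i hi * Xmul n i (Nat.lt_of_succ_lt hi) = Xmul n (i+1) hi * D i hi + 1 := by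
  refine LinearMap.ext fun f => ?_
  apply cancelX (a := ⟨i, Nat.lt_of_succ_lt hi⟩) (b := ⟨i+1, hi⟩)
    (fun he => by simpa using congrArg Fin.val he)
  have h1 := hD i hi f
  have h2 := hD i hi (X ⟨i, Nat.lt_of_succ_lt hi⟩ * f)
  rw [show (swapVar n i hi) (X ⟨i, Nat.lt_of_succ_lt hi⟩ * f)
      = X ⟨i+1, hi⟩ * swapVar n i hi f from by
    rw [map_mul, swapVar_X, Equiv.swap_apply_left]] at h2
  simp only [Module.End.mul_apply, LinearMap.add_apply, Module.End.one_apply, Xmul_apply]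
  linear_combination h2 - X (⟨i+1, hi⟩ : Fin n) * h1

-- R2 : D_i commutes with x_j for j ∉ {i, i+1}
lemma R2 (hD : ∀ i hi, IsDD n i hi (D i hi)) (i : ℕ) (hi : i + 1 < n)
    (j : ℕ) (hj : j < n) (h1 : j ≠ i) (h2 : j ≠ i + 1) :
    Commute (D i hi) (Xmul n j hj) := by
  refine LinearMap.ext fun f => ?_
  apply cancelX (a := ⟨i, Nat.lt_of_succ_lt hi⟩) (b := ⟨i+1, hi⟩)
    (fun he => by simpa using congrArg Fin.val he)
  have hf := hD i hi f
  have hxf := hD i hi (X ⟨j, hj⟩ * f)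
  rw [show (swapVar n i hi) (X ⟨j, hj⟩ * f) = X ⟨j, hj⟩ * swapVar n i hi f from by
    rw [map_mul, swapVar_X, Equiv.swap_apply_of_ne_of_ne
      (fun he => h1 (congrArg Fin.val he)) (fun he => h2 (congrArg Fin.val he))]] at hxf
  simp only [Module.End.mul_apply, Xmul_apply]
  linear_combination hxf - X (⟨j, hj⟩ : Fin n) * hf

-- swaps with disjoint supports commute pointwise
lemma swap_swap_comm {α : Type*} [DecidableEq α] {a b c d : α}
    (hac : a ≠ c) (had : a ≠ d) (hbc : b ≠ c) (hbd : b ≠ d) (x : α) :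
    Equiv.swap a b (Equiv.swap c d x) = Equiv.swap c d (Equiv.swap a b x) := by
  simp only [Equiv.swap_apply_def]
  split_ifs <;> simp_all

lemma swapVar_swapVar {i j : ℕ} (hi : i + 1 < n) (hj : j + 1 < n)
    (hij : i + 1 < j ∨ j + 1 < i) (f : Pl n) :
    swapVar n i hi (swapVar n j hj f) = swapVar n j hj (swapVar n i hi f) := by
  unfold swapVar
  rw [rename_rename, rename_rename]
  have : (⇑(Equiv.swap (⟨i, Nat.lt_of_succ_lt hi⟩ : Fin n) ⟨i+1, hi⟩) ∘
      ⇑(Equiv.swap (⟨j, Nat.lt_of_succ_lt hj⟩ : Fin n) ⟨j+1, hj⟩)) =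
      (⇑(Equiv.swap (⟨j, Nat.lt_of_succ_lt hj⟩ : Fin n) ⟨j+1, hj⟩) ∘
      ⇑(Equiv.swap (⟨i, Nat.lt_of_succ_lt hi⟩ : Fin n) ⟨i+1, hi⟩)) := by
    funext x
    exact swap_swap_comm (by simp only [ne_eq, Fin.mk.injEq]; omega)
      (by simp only [ne_eq, Fin.mk.injEq]; omega)
      (by simp only [ne_eq, Fin.mk.injEq]; omega)
      (by simp only [ne_eq, Fin.mk.injEq]; omega) x
  rw [this]

-- swapVar i fixes X j for j ∉ {i, i+1}
lemma swapVar_fix {i : ℕ} (hi : i + 1 < n) {j : Fin n} (h1 : (j : ℕ) ≠ i)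
    (h2 : (j : ℕ) ≠ i + 1) : swapVar n i hi (X j) = X j := by
  rw [swapVar_X, Equiv.swap_apply_of_ne_of_ne
    (fun he => h1 (congrArg Fin.val he)) (fun he => h2 (congrArg Fin.val he))]

-- swapVar_i commutes with D_j for disjoint indices
lemma swapVar_D (hD : ∀ i hi, IsDD n i hi (D i hi)) {i j : ℕ} (hi : i + 1 < n)
    (hj : j + 1 < n) (hij : i + 1 < j ∨ j + 1 < i) (f : Pl n) :
    swapVar n i hi (D j hj f) = D j hj (swapVar n i hi f) := by
  apply cancelX (a := ⟨j, Nat.lt_of_succ_lt hj⟩) (b := ⟨j+1, hj⟩)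
    (fun he => by simpa using congrArg Fin.val he)
  have h1 : (X (⟨j, Nat.lt_of_succ_lt hj⟩ : Fin n) - X ⟨j+1, hj⟩) * swapVar n i hi (D j hj f)
      = swapVar n i hi ((X ⟨j, Nat.lt_of_succ_lt hj⟩ - X ⟨j+1, hj⟩) * D j hj f) := by
    rw [map_mul, map_sub, swapVar_fix hi (by simp only [Fin.val_mk]; omega) (by simp only [Fin.val_mk]; omega),
      swapVar_fix hi (by simp only [Fin.val_mk]; omega) (by simp only [Fin.val_mk]; omega)]
  rw [h1, hD j hj f, hD j hj (swapVar n i hi f), map_sub,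
    swapVar_swapVar hi hj hij f]

-- D_j is linear over polynomials fixed by swap_j
lemma Dlin (hD : ∀ i hi, IsDD n i hi (D i hi)) {j : ℕ} (hj : j + 1 < n)
    {p : Pl n} (hp : swapVar n j hj p = p) (g : Pl n) :
    D j hj (p * g) = p * D j hj g := by
  apply cancelX (a := ⟨j, Nat.lt_of_succ_lt hj⟩) (b := ⟨j+1, hj⟩)
    (fun he => by simpa using congrArg Fin.val he)
  rw [hD j hj (p * g), map_mul, hp]
  have := hD j hj g
  linear_combination (-p) * this

-- R3 : far commutation of divided differences
lemma R3 (hD : ∀ i hi, IsDD n i hi (D i hi)) {i j : ℕ} (hi : i + 1 < n)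
    (hj : j + 1 < n) (hij : i + 1 < j ∨ j + 1 < i) :
    Commute (D i hi) (D j hj) := by
  refine LinearMap.ext fun f => ?_
  simp only [Module.End.mul_apply]
  apply cancelX (a := ⟨i, Nat.lt_of_succ_lt hi⟩) (b := ⟨i+1, hi⟩)
    (fun he => by simpa using congrArg Fin.val he)
  have e1 : (X (⟨i, Nat.lt_of_succ_lt hi⟩ : Fin n) - X ⟨i+1, hi⟩) * D i hi (D j hj f)
      = D j hj f - swapVar n i hi (D j hj f) := hD i hi (D j hj f)
  have e2 : D j hj ((X (⟨i, Nat.lt_of_succ_lt hi⟩ : Fin n) - X ⟨i+1, hi⟩) * D i hi f)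
      = (X (⟨i, Nat.lt_of_succ_lt hi⟩ : Fin n) - X ⟨i+1, hi⟩) * D j hj (D i hi f) := by
    apply Dlin hD
    rw [map_sub, swapVar_fix hj (by simp only [Fin.val_mk]; omega) (by simp only [Fin.val_mk]; omega), swapVar_fix hj (by simp only [Fin.val_mk]; omega) (by simp only [Fin.val_mk]; omega)]
  rw [e1, swapVar_D hD hi hj hij, ← map_sub, ← hD i hi f, e2]

lemma chain_zero : chainD n D 0 = 1 := by simp [chainD]

lemma chain_succ (hn : 2 ≤ n) (k : ℕ) :
    chainD n D (k+1) = chainD n D k * D (n-2-k) (by omega) := by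
  unfold chainD
  rw [List.range_succ, List.map_append, List.prod_append]
  simp only [List.map_cons, List.map_nil, List.prod_cons, List.prod_nil, mul_one]
  rw [dif_pos (by omega : n - 2 - k + 1 < n)]

lemma Xmul_comm_Xmul {a b : ℕ} (ha : a < n) (hb : b < n) :
    Commute (Xmul n a ha) (Xmul n b hb) := by
  refine LinearMap.ext fun f => ?_
  simp only [Module.End.mul_apply, Xmul_apply]
  ring

-- Xmul j commutes with chainD m provided j avoids all indices
lemma Xmul_comm_chain (hD : ∀ i hi, IsDD n i hi (D i hi)) (hn : 2 ≤ n) {j : ℕ}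
    (hj : j < n) (m : ℕ) (h : ∀ t < m, j ≠ n-2-t ∧ j ≠ n-2-t+1) :
    Commute (Xmul n j hj) (chainD n D m) := by
  induction m with
  | zero => rw [chain_zero]; exact Commute.one_right _
  | succ m ih =>
    rw [chain_succ hn]
    exact Commute.mul_right (ih fun t ht => h t (Nat.lt_succ_of_lt ht))
      ((R2 hD (n-2-m) (by omega) j hj (h m (Nat.lt_succ_self m)).1
        (h m (Nat.lt_succ_self m)).2).symm)

-- D j commutes with chainD m provided far from all indices
lemma D_comm_chain (hD : ∀ i hi, IsDD n i hi (D i hi)) (hn : 2 ≤ n) {j : ℕ}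
    (hj : j + 1 < n) (m : ℕ) (h : ∀ t < m, j + 1 < n-2-t ∨ (n-2-t) + 1 < j) :
    Commute (D j hj) (chainD n D m) := by
  induction m with
  | zero => rw [chain_zero]; exact Commute.one_right _
  | succ m ih =>
    rw [chain_succ hn]
    exact Commute.mul_right (ih fun t ht => h t (Nat.lt_succ_of_lt ht))
      (R3 hD hj (by omega) (by
        rcases h m (Nat.lt_succ_self m) with h' | h'
        · exact Or.inl h'
        · exact Or.inr h'))

-- membership lemmas
lemma Xmul_mem_NHalg {j : ℕ} (hj : j < n) : Xmul n j hj ∈ NHalg n D :=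
  Algebra.subset_adjoin (Or.inl ⟨j, hj, rfl⟩)

lemma D_mem_NHalg {i : ℕ} (hi : i + 1 < n) : D i hi ∈ NHalg n D :=
  Algebra.subset_adjoin (Or.inr ⟨i, hi, rfl⟩)

lemma Xmul_mem_NHalg' {j : ℕ} (hj : j + 1 < n) :
    Xmul n j (Nat.lt_of_succ_lt hj) ∈ NHalg' n D :=
  Algebra.subset_adjoin (Or.inl ⟨j, hj, rfl⟩)

lemma D_mem_NHalg' {i : ℕ} (hi : i + 2 < n) :
    D i (Nat.lt_of_succ_lt hi) ∈ NHalg' n D :=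
  Algebra.subset_adjoin (Or.inr ⟨i, hi, rfl⟩)

lemma NHalg'_le : NHalg' n D ≤ NHalg n D := by
  apply Algebra.adjoin_mono
  rintro a (⟨j, hj, rfl⟩ | ⟨i, hi, rfl⟩)
  · exact Or.inl ⟨j, Nat.lt_of_succ_lt hj, rfl⟩
  · exact Or.inr ⟨i, Nat.lt_of_succ_lt hi, rfl⟩

lemma chain_mem_NHalg (m : ℕ) : chainD n D m ∈ NHalg n D := by
  induction m with
  | zero =>
    rw [chain_zero]; exact one_mem _
  | succ m ih =>
    by_cases hn : 2 ≤ n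
    · rw [chain_succ hn]; exact mul_mem ih (D_mem_NHalg _)
    · unfold chainD
      rw [List.range_succ, List.map_append, List.prod_append]
      refine mul_mem ih ?_
      simp only [List.map_cons, List.map_nil, List.prod_cons, List.prod_nil, mul_one]
      split
      · exact D_mem_NHalg _
      · exact one_mem _

lemma Xmul_congr {a b : ℕ} (h : a = b) (ha : a < n) (hb : b < n) :
    Xmul n a ha = Xmul n b hb := by subst h; rfl

-- the key straightening identity
lemma key (hD : ∀ i hi, IsDD n i hi (D i hi)) (hn : 2 ≤ n) (k : ℕ) (hk : k ≤ n - 1) :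
    ∃ v : ℕ → Module.End ℤ (MvPolynomial (Fin n) ℤ),
      (∀ m < k, v m ∈ NHalg' n D ∧ Commute (Xmul n (n-1) (by omega)) (v m)) ∧
      chainD n D k * Xmul n (n-1-k) (by omega) =
        Xmul n (n-1) (by omega) * chainD n D k +
          ∑ m ∈ Finset.range k, v m * chainD n D m := by
  induction k with
  | zero =>
    refine ⟨fun _ => 0, fun m hm => absurd hm (Nat.not_lt_zero m), ?_⟩
    rw [chain_zero]
    simp [Nat.sub_zero]
  | succ k ih =>
    have hk2 : k ≤ n - 2 := by omega
    obtain ⟨v, hv, hkey⟩ := ih (by omega)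
    refine ⟨fun m => if m = k then 1 else v m * D (n-2-k) (by omega),
      fun m hm => ?_, ?_⟩
    · by_cases hmk : m = k
      · simp only [hmk, if_pos rfl]
        exact ⟨one_mem _, Commute.one_right _⟩
      · have hmk' : m < k := by omega
        simp only [if_neg hmk]
        refine ⟨mul_mem (hv m hmk').1 ?_, Commute.mul_right (hv m hmk').2
          ((R2 hD (n-2-k) (by omega) (n-1) (by omega) (by omega) (by omega)).symm)⟩
        exact D_mem_NHalg' (show (n-2-k) + 2 < n by omega)
    · have e1 : chainD n D (k+1) * Xmul n (n-1-(k+1)) (by omega)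
          = chainD n D k * (D (n-2-k) (by omega) * Xmul n (n-2-k) (by omega)) := by
        rw [chain_succ hn, mul_assoc,
          Xmul_congr (show n-1-(k+1) = n-2-k by omega) (by omega) (by omega)]
      have h2 : ∀ m ∈ Finset.range k,
          (if m = k then (1 : Module.End ℤ (MvPolynomial (Fin n) ℤ))
            else v m * D (n-2-k) (by omega)) * chainD n D m
          = v m * chainD n D m * D (n-2-k) (by omega) := by
        intro m hm
        have hm' : m < k := Finset.mem_range.1 hm
        rw [if_neg (by omega : ¬ m = k), mul_assoc, mul_assoc,
          (D_comm_chain hD hn (by omega) m (fun t ht => Or.inl (by omega))).eq]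
      rw [e1, R1 hD (n-2-k) (by omega),
        Xmul_congr (show n-2-k+1 = n-1-k by omega) (by omega) (by omega),
        mul_add, mul_one, ← mul_assoc, hkey, add_mul, Finset.sum_mul,
        Finset.sum_range_succ]
      beta_reduce
      rw [if_pos rfl, one_mul, Finset.sum_congr rfl h2, mul_assoc, ← chain_succ hn]
      abel

end Rels
set_option maxHeartbeats 2000000
set_option synthInstance.maxHeartbeats 1000000

theorem stmt19 (n : ℕ) (hn : 2 ≤ n)
    (D : ∀ i, i + 1 < n → Module.End ℤ (MvPolynomial (Fin n) ℤ))
    (hD : ∀ i hi, IsDD n i hi (D i hi))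
    (N : Type) [AddCommGroup N]
    [Module (NHalg n D) N] [Module (NHalg n D)ᵐᵒᵖ N]
    [SMulCommClass (NHalg n D) (NHalg n D)ᵐᵒᵖ N]
    (bas : Module.Basis (ℕ × Fin n) (NHalg n D) N)
    (hbas : ∀ (i : ℕ) (k : Fin n) (t : NHalg n D),
      (t : Module.End ℤ (MvPolynomial (Fin n) ℤ)) =
          Xmul n (n - 1) (by omega) ^ i * chainD n D k →
      bas (i, k) = MulOpposite.op t • bas (0, ⟨0, by omega⟩))
    (hmid : ∀ a : NHalg n D,
      (a : Module.End ℤ (MvPolynomial (Fin n) ℤ)) ∈ NHalg' n D →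
      a • bas (0, ⟨0, by omega⟩) = MulOpposite.op a • bas (0, ⟨0, by omega⟩))
    (c : N) (hc : ∀ a : NHalg n D, a • c = MulOpposite.op a • c) :
    c = 0 := by
  classical
  haveI : SMulCommClass (NHalg n D)ᵐᵒᵖ (NHalg n D) N :=
    SMulCommClass.symm (NHalg n D) (NHalg n D)ᵐᵒᵖ N
  have htop : n - 1 < n := by omega
  set b0 : N := bas (0, ⟨0, by omega⟩) with hb0def
  -- subalgebra elements
  set xT : NHalg n D := ⟨Xmul n (n-1) htop, Xmul_mem_NHalg htop⟩ with hxT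
  set ch : ℕ → NHalg n D := fun m => ⟨chainD n D m, chain_mem_NHalg m⟩ with hch
  have hbasis : ∀ (i' : ℕ) (m : Fin n),
      bas (i', m) = MulOpposite.op (xT ^ i' * ch (m : ℕ)) • b0 := by
    intro i' m
    apply hbas
    rw [hxT, hch]
    push_cast
    rfl
  -- main per-column step
  have main : ∀ k : Fin n,
      (∀ k' : Fin n, (k : ℕ) < (k' : ℕ) → ∀ i, bas.repr c (i, k') = 0) →
      ∀ i, bas.repr c (i, k) = 0 := by
    intro k IH
    have hkn : (k : ℕ) < n := k.isLt
    have hglt : n - 1 - (k : ℕ) < n := by omega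
    set g : NHalg n D := ⟨Xmul n (n-1-(k:ℕ)) hglt, Xmul_mem_NHalg hglt⟩ with hg
    obtain ⟨v, hv, hkey⟩ := key hD hn (k : ℕ) (by omega)
    set vh : ℕ → NHalg n D := fun m =>
      if h : v m ∈ NHalg' n D then ⟨v m, NHalg'_le h⟩ else 0 with hvh
    have hvh' : ∀ m, ((vh m : NHalg n D) : Module.End ℤ (MvPolynomial (Fin n) ℤ))
        ∈ NHalg' n D := by
      intro m
      rw [hvh]
      dsimp only
      split
      · assumption
      · exact zero_mem _
    have hvhm : ∀ m < (k : ℕ), ((vh m : NHalg n D) : Module.End ℤ (MvPolynomial (Fin n) ℤ)) = v m := by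
      intro m hm
      rw [hvh]
      dsimp only
      rw [dif_pos (hv m hm).1]
    set fm : ℕ → Fin n := fun m => ⟨min m (n-1), by omega⟩ with hfm
    have hfmv : ∀ m < (k : ℕ), ((fm m : Fin n) : ℕ) = m := by
      intro m hm
      simp only [hfm]
      exact min_eq_left (by omega)
    -- A-level product identity
    have hprod : ∀ i' : ℕ, (xT ^ i' * ch (k : ℕ)) * g
        = xT ^ (i'+1) * ch (k : ℕ)
          + ∑ m ∈ Finset.range (k : ℕ), vh m * (xT ^ i' * ch m) := by
      intro i'
      have endEq : (Xmul n (n-1) htop ^ i' * chainD n D (k:ℕ)) * Xmul n (n-1-(k:ℕ)) hglt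
          = Xmul n (n-1) htop ^ (i'+1) * chainD n D (k:ℕ)
            + ∑ m ∈ Finset.range (k:ℕ), v m * (Xmul n (n-1) htop ^ i' * chainD n D m) := by
        rw [mul_assoc, hkey, mul_add, Finset.mul_sum, ← mul_assoc, ← pow_succ]
        congr 1
        refine Finset.sum_congr rfl fun m hm => ?_
        have hcm : Commute (v m) (Xmul n (n-1) htop ^ i') :=
          ((hv m (Finset.mem_range.1 hm)).2.symm).pow_right i'
        rw [← mul_assoc, ← hcm.eq, mul_assoc]
      apply Subtype.ext
      push_cast
      rw [endEq]
      congr 1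
      refine Finset.sum_congr rfl fun m hm => ?_
      push_cast
      rw [hvhm m (Finset.mem_range.1 hm)]
    -- op action on the k-th column basis vectors
    have hopk : ∀ i' : ℕ, MulOpposite.op g • bas (i', k)
        = bas (i'+1, k) + ∑ m ∈ Finset.range (k : ℕ), vh m • bas (i', fm m) := by
      intro i'
      rw [hbasis i' k, smul_smul, ← MulOpposite.op_mul, hprod i', MulOpposite.op_add, add_smul]
      congr 1
      · exact (hbasis (i'+1) k).symm
      · rw [show MulOpposite.op (∑ m ∈ Finset.range (k:ℕ), vh m * (xT ^ i' * ch m))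
            = ∑ m ∈ Finset.range (k:ℕ), MulOpposite.op (vh m * (xT ^ i' * ch m)) from
            map_sum MulOpposite.opAddEquiv _ _, Finset.sum_smul]
        refine Finset.sum_congr rfl fun m hm => ?_
        have hm' : m < (k:ℕ) := Finset.mem_range.1 hm
        rw [MulOpposite.op_mul, mul_smul, ← hmid (vh m) (hvh' m), smul_comm]
        have hb2 := hbasis i' (fm m)
        rw [hfmv m hm'] at hb2
        rw [← hb2]
    -- op action on lower columns
    have hoplt : ∀ (i' : ℕ) (k' : Fin n), (k' : ℕ) < (k : ℕ) →
        MulOpposite.op g • bas (i', k') = g • bas (i', k') := by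
      intro i' k' hk'
      have hcomm : Commute (Xmul n (n-1-(k:ℕ)) hglt)
          ((Xmul n (n-1) htop) ^ i' * chainD n D (k':ℕ)) := by
        refine Commute.mul_right ((Xmul_comm_Xmul hglt htop).pow_right i') ?_
        exact Xmul_comm_chain hD hn hglt (k':ℕ) fun t ht => ⟨by omega, by omega⟩
      have heq : (xT ^ i' * ch (k':ℕ)) * g = g * (xT ^ i' * ch (k':ℕ)) := by
        apply Subtype.ext
        push_cast
        exact hcomm.eq.symm
      have memg' : ((g : NHalg n D) : Module.End ℤ (MvPolynomial (Fin n) ℤ)) ∈ NHalg' n D :=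
        Xmul_mem_NHalg' (show (n-1-(k:ℕ))+1 < n by omega)
      rw [hbasis i' k', smul_smul, ← MulOpposite.op_mul, heq, MulOpposite.op_mul, mul_smul,
        ← hmid g memg', smul_comm, ← hbasis i' k']
    -- the coordinate recursion
    have hrec : ∀ i0 : ℕ, bas.repr c (i0, k) = g * bas.repr c (i0+1, k) := by
      intro i0
      have hLHS : bas.repr (g • c) (i0+1, k) = g * bas.repr c (i0+1, k) := by
        rw [map_smul, Finsupp.smul_apply, smul_eq_mul]
      have hcsum : c = ∑ p ∈ (bas.repr c).support, bas.repr c p • bas p := by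
        conv_lhs => rw [← bas.linearCombination_repr c]
        rw [Finsupp.linearCombination_apply, Finsupp.sum]
      -- evaluate the single-column coordinate of each summand
      have hterm0 : ∀ i1 : ℕ,
          bas.repr (MulOpposite.op g • bas (i1, k)) (i0+1, k)
            = if i1 = i0 then 1 else 0 := by
        intro i1
        rw [hopk i1, map_add, Finsupp.add_apply, bas.repr_self,
          show bas.repr (∑ m ∈ Finset.range (k:ℕ), vh m • bas (i1, fm m))
            = ∑ m ∈ Finset.range (k:ℕ), bas.repr (vh m • bas (i1, fm m)) from
            map_sum bas.repr _ _, Finset.sum_apply']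
        rw [Finset.sum_eq_zero (fun m hm => ?_), add_zero,
          Finsupp.single_apply]
        · by_cases h : i1 = i0
          · subst h
            rw [if_pos rfl, if_pos rfl]
          · rw [if_neg (fun he => h (by have := (Prod.ext_iff.1 he).1; omega)), if_neg h]
        · have hm' : m < (k:ℕ) := Finset.mem_range.1 hm
          rw [map_smul, Finsupp.smul_apply, bas.repr_self,
            Finsupp.single_eq_of_ne (fun hq => ?_), smul_zero]
          have h2 : fm m = k := congrArg Prod.snd hq |>.symm
          have h3 := congrArg Fin.val h2
          rw [hfmv m hm'] at h3
          omega
      have hRHS : bas.repr (MulOpposite.op g • c) (i0+1, k) = bas.repr c (i0, k) := by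
        conv_lhs => rw [hcsum]
        rw [Finset.smul_sum,
          show bas.repr (∑ p ∈ (bas.repr c).support, MulOpposite.op g • (bas.repr c p • bas p))
            = ∑ p ∈ (bas.repr c).support, bas.repr (MulOpposite.op g • (bas.repr c p • bas p)) from
            map_sum bas.repr _ _, Finset.sum_apply']
        rw [Finset.sum_eq_single (i0, k)]
        · rw [smul_comm, map_smul, Finsupp.smul_apply, hterm0 i0, if_pos rfl, smul_eq_mul, mul_one]
        · rintro ⟨i1, k1⟩ hp hne
          rcases lt_trichotomy (k1 : ℕ) (k : ℕ) with hlt | heq | hgt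
          · rw [smul_comm, map_smul, Finsupp.smul_apply, hoplt i1 k1 hlt, map_smul,
              Finsupp.smul_apply, bas.repr_self,
              Finsupp.single_eq_of_ne (fun hq => by
                have h2 : k1 = k := congrArg Prod.snd hq |>.symm
                have h3 := congrArg Fin.val h2
                omega), smul_zero, smul_zero]
          · have hk1 : k1 = k := Fin.ext heq
            subst hk1
            rw [smul_comm, map_smul, Finsupp.smul_apply, hterm0 i1,
              if_neg (fun h => hne (by rw [h])), smul_zero]
          · rw [IH k1 hgt i1, zero_smul, smul_zero, map_zero, Finsupp.zero_apply]
        · intro hnot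
          rw [Finsupp.notMem_support_iff.1 hnot, zero_smul, smul_zero, map_zero,
            Finsupp.zero_apply]
      calc bas.repr c (i0, k) = bas.repr (MulOpposite.op g • c) (i0+1, k) := hRHS.symm
        _ = bas.repr (g • c) (i0+1, k) := by rw [← hc g]
        _ = g * bas.repr c (i0+1, k) := hLHS
    -- support bound
    obtain ⟨Bd, hBd⟩ : ∃ Bd : ℕ, ∀ i, Bd < i → bas.repr c (i, k) = 0 := by
      refine ⟨((bas.repr c).support.image Prod.fst).sup id, fun i hi => ?_⟩
      by_contra hne
      have hmem : (i, k) ∈ (bas.repr c).support := Finsupp.mem_support_iff.2 hne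
      have : i ≤ ((bas.repr c).support.image Prod.fst).sup id :=
        Finset.le_sup (f := id) (Finset.mem_image_of_mem Prod.fst hmem)
      omega
    have hpow : ∀ d i, bas.repr c (i, k) = g ^ d * bas.repr c (i + d, k) := by
      intro d
      induction d with
      | zero => intro i; simp
      | succ d ihd =>
        intro i
        rw [hrec i, ihd (i+1), ← mul_assoc, ← pow_succ',
          show i + 1 + d = i + (d+1) by omega]
    intro i
    rw [hpow (Bd + 1) i, hBd (i + (Bd+1)) (by omega), mul_zero]
  -- downward induction on the column index
  have outer : ∀ m : ℕ, ∀ k : Fin n, n - 1 - m ≤ (k : ℕ) → ∀ i, bas.repr c (i, k) = 0 := by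
    intro m
    induction m with
    | zero =>
      intro k hk
      refine main k fun k' hk' i => ?_
      exact absurd hk' (by have := k'.isLt; omega)
    | succ m ihm =>
      intro k hk
      by_cases h : n - 1 - m ≤ (k : ℕ)
      · exact ihm k h
      · refine main k fun k' hk' i => ihm k' (by omega) i
  have hall : bas.repr c = 0 := by
    apply Finsupp.ext
    rintro ⟨i, k⟩
    simpa using outer n k (by omega) i
  exact (LinearEquiv.map_eq_zero_iff bas.repr).1 hall
end
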